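/- arXiv:1408.2002 — 2 statements merged into one kernel-verified Lean document; each statement's English description precedes it below -/
import Mathlib

section
/- Let V₂ be the set of vectors in ℝ^6 having exactly two coordinates equal to 2 and the remaining four coordinates equal to 0, and let V₃ be the set of vectors in ℝ^6 having exactly four coordinates equal to 2 and the remaining two coordinates equal to 0. Let H be the simple graph on V₂ ∪ V₃ in which two distinct points are adjacent if and only if their squared Euclidean distance equals 8. Then the chromatic number of H equals 8. -/
set_option maxRecDepth 10000

/-- The graph on a set `P` of points of `ℝⁿ` where two distinct points are
adjacent iff their squared Euclidean distance equals `s`. -/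
def distSqGraph {n : ℕ} (P : Set (Fin n → ℝ)) (s : ℝ) : SimpleGraph P where
  Adj x y := x ≠ y ∧ ∑ i, (x.1 i - y.1 i) ^ 2 = s
  symm := by
    constructor
    rintro x y ⟨hne, h⟩
    refine ⟨hne.symm, ?_⟩
    rw [← h]
    exact Finset.sum_congr rfl fun i _ => by ring
  loopless := by constructor; rintro x ⟨h, -⟩; exact h rfl

/-- Vectors in `ℝ⁶` with exactly `k` coordinates equal to `2` and the rest `0`. -/
def twosAndZeros (k : ℕ) : Set (Fin 6 → ℝ) :=
  {x | ∃ s : Finset (Fin 6), s.card = k ∧ ∀ i, x i = if i ∈ s then 2 else 0}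

/-! ### Auxiliary material -/

/-- An explicit color table, indexed by bitmask of a subset of `Fin 6`. -/
def colTbl : List ℕ :=
  [0, 0, 0, 7, 0, 5, 6, 0, 0, 6, 0, 0, 3, 0, 0, 4, 0, 2, 1, 0, 7, 0, 0, 0,
   4, 0, 0, 5, 0, 1, 2, 0, 0, 1, 5, 0, 4, 0, 0, 2, 2, 0, 0, 3, 0, 0, 1, 0,
   0, 0, 0, 4, 0, 6, 3, 0, 0, 7, 6, 0, 5, 0, 0, 0]

/-- Explicit 8-coloring of the relevant finsets. -/
def col (s : Finset (Fin 6)) : Fin 8 :=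
  ⟨(colTbl.getD (∑ i ∈ s, 2 ^ i.val) 0) % 8, Nat.mod_lt _ (by norm_num)⟩

theorem col_valid : ∀ s t : Finset (Fin 6), (s.card = 2 ∨ s.card = 4) →
    (t.card = 2 ∨ t.card = 4) → (symmDiff s t).card = 2 → col s ≠ col t := by decide

theorem card_W : ((Finset.univ : Finset (Finset (Fin 6))).filter
    (fun s => s.card = 2 ∨ s.card = 4)).card = 30 := by decide

/-- the indicator-style vector of a finset -/
def ind (s : Finset (Fin 6)) : Fin 6 → ℝ := fun i => if i ∈ s then 2 else 0

noncomputable def supp (x : Fin 6 → ℝ) : Finset (Fin 6) :=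
  Finset.univ.filter (fun i => x i = (2:ℝ))

lemma supp_ind (s : Finset (Fin 6)) : supp (ind s) = s := by
  ext i
  by_cases h : i ∈ s <;> simp [supp, ind, h]

lemma mem_twos_iff {k : ℕ} {x : Fin 6 → ℝ} :
    x ∈ twosAndZeros k ↔ ∃ s : Finset (Fin 6), s.card = k ∧ x = ind s := by
  constructor
  · rintro ⟨s, hs, h⟩; exact ⟨s, hs, funext h⟩
  · rintro ⟨s, hs, rfl⟩; exact ⟨s, hs, fun i => rfl⟩

lemma ind_mem {s : Finset (Fin 6)} (h : s.card = 2 ∨ s.card = 4) :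
    ind s ∈ twosAndZeros 2 ∪ twosAndZeros 4 := by
  rcases h with h | h
  · exact Or.inl (mem_twos_iff.mpr ⟨s, h, rfl⟩)
  · exact Or.inr (mem_twos_iff.mpr ⟨s, h, rfl⟩)

lemma mem_union_iff {x : Fin 6 → ℝ} :
    x ∈ twosAndZeros 2 ∪ twosAndZeros 4 ↔
      ∃ s : Finset (Fin 6), (s.card = 2 ∨ s.card = 4) ∧ x = ind s := by
  constructor
  · rintro (h | h)
    · obtain ⟨s, hs, rfl⟩ := mem_twos_iff.mp h; exact ⟨s, Or.inl hs, rfl⟩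
    · obtain ⟨s, hs, rfl⟩ := mem_twos_iff.mp h; exact ⟨s, Or.inr hs, rfl⟩
  · rintro ⟨s, hs, rfl⟩; exact ind_mem hs

lemma sum_ind (s t : Finset (Fin 6)) :
    ∑ i, (ind s i - ind t i) ^ 2 = 4 * ((symmDiff s t).card : ℝ) := by
  have h : ∀ i, (ind s i - ind t i) ^ 2 = if i ∈ symmDiff s t then (4:ℝ) else 0 := by
    intro i
    by_cases hs : i ∈ s <;> by_cases ht : i ∈ t <;>
      simp [ind, Finset.mem_symmDiff, hs, ht] <;> norm_num
  rw [Finset.sum_congr rfl fun i _ => h i, Finset.sum_ite_mem, Finset.univ_inter,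
    Finset.sum_const, nsmul_eq_mul]
  ring

/-- adjacency in the graph corresponds to symmetric difference of size 2 -/
lemma adj_iff {s t : Finset (Fin 6)} (hs : ind s ∈ twosAndZeros 2 ∪ twosAndZeros 4)
    (ht : ind t ∈ twosAndZeros 2 ∪ twosAndZeros 4) :
    (distSqGraph (twosAndZeros 2 ∪ twosAndZeros 4) 8).Adj ⟨ind s, hs⟩ ⟨ind t, ht⟩ ↔
      (symmDiff s t).card = 2 := by
  constructor
  · rintro ⟨-, hsum⟩
    rw [sum_ind] at hsum
    have : ((symmDiff s t).card : ℝ) = 2 := by linarith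
    exact_mod_cast this
  · intro h
    refine ⟨?_, by rw [sum_ind, h]; norm_num⟩
    have hne : (symmDiff s t).Nonempty := by
      rw [← Finset.card_pos, h]; norm_num
    obtain ⟨i, hi⟩ := hne
    rw [Finset.mem_symmDiff] at hi
    intro hxy
    have hfun : ind s = ind t := congrArg Subtype.val hxy
    have := congrFun hfun i
    rcases hi with ⟨h1, h2⟩ | ⟨h1, h2⟩ <;> simp [ind, h1, h2] at this

lemma card_sd (s t : Finset (Fin 6)) :
    (symmDiff s t).card + (s ∩ t).card + (s ∩ t).card = s.card + t.card := by
  have h1 : symmDiff s t = (s ∪ t) \ (s ∩ t) := symmDiff_eq_sup_sdiff_inf s t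
  have h2 : (s ∩ t) ⊆ (s ∪ t) := (Finset.inter_subset_left).trans Finset.subset_union_left
  have h3 : (symmDiff s t).card = (s ∪ t).card - (s ∩ t).card := by
    rw [h1]; exact Finset.card_sdiff_of_subset h2
  have h4 := Finset.card_union_add_card_inter s t
  have h5 := Finset.card_le_card h2
  omega

lemma sd_ne_zero {s t : Finset (Fin 6)} (h : s ≠ t) : (symmDiff s t).card ≠ 0 := by
  intro h0
  exact h (symmDiff_eq_bot.mp (Finset.card_eq_zero.mp h0))

lemma matching_le_three (A : Finset (Finset (Fin 6))) (hA : ∀ a ∈ A, a.card = 2)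
    (hd : ∀ a ∈ A, ∀ b ∈ A, a ≠ b → Disjoint a b) : A.card ≤ 3 := by
  have h1 : (A.biUnion id).card = ∑ a ∈ A, a.card := Finset.card_biUnion hd
  have h2 : ∑ a ∈ A, a.card = 2 * A.card := by
    rw [Finset.sum_congr rfl hA, Finset.sum_const, smul_eq_mul, mul_comm]
  have h3 : (A.biUnion id).card ≤ 6 := by
    have := Finset.card_le_univ (A.biUnion id)
    simpa using this
  omega

lemma no_triple {e₁ e₂ e₃ f : Finset (Fin 6)} (hf : f.card = 2)
    (h12 : Disjoint e₁ e₂) (h13 : Disjoint e₁ e₃) (h23 : Disjoint e₂ e₃)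
    (m1 : (f ∩ e₁).Nonempty) (m2 : (f ∩ e₂).Nonempty) (m3 : (f ∩ e₃).Nonempty) : False := by
  obtain ⟨a₁, ha₁⟩ := m1
  obtain ⟨a₂, ha₂⟩ := m2
  obtain ⟨a₃, ha₃⟩ := m3
  rw [Finset.mem_inter] at ha₁ ha₂ ha₃
  have n12 : a₁ ≠ a₂ := fun h => Finset.disjoint_left.mp h12 ha₁.2 (h ▸ ha₂.2)
  have n13 : a₁ ≠ a₃ := fun h => Finset.disjoint_left.mp h13 ha₁.2 (h ▸ ha₃.2)
  have n23 : a₂ ≠ a₃ := fun h => Finset.disjoint_left.mp h23 ha₂.2 (h ▸ ha₃.2)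
  have hsub : ({a₁, a₂, a₃} : Finset (Fin 6)) ⊆ f := by
    intro x hx
    simp only [Finset.mem_insert, Finset.mem_singleton] at hx
    rcases hx with rfl | rfl | rfl
    exacts [ha₁.1, ha₂.1, ha₃.1]
  have hc : ({a₁, a₂, a₃} : Finset (Fin 6)).card = 3 := by
    rw [Finset.card_insert_of_notMem (by simp [n12, n13]),
      Finset.card_insert_of_notMem (by simp [n23]), Finset.card_singleton]
  have := Finset.card_le_card hsub
  omega

lemma cross_bound (A B : Finset (Finset (Fin 6)))
    (hA : ∀ a ∈ A, a.card = 2) (hB : ∀ b ∈ B, b.card = 2)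
    (hdA : ∀ a ∈ A, ∀ b ∈ A, a ≠ b → Disjoint a b)
    (hdB : ∀ a ∈ B, ∀ b ∈ B, a ≠ b → Disjoint a b)
    (hcross : ∀ a ∈ A, ∀ b ∈ B, (b ∩ a).Nonempty) :
    A.card + B.card ≤ 4 := by
  have key : ∀ (X Y : Finset (Finset (Fin 6))), (∀ a ∈ X, a.card = 2) →
      (∀ b ∈ Y, b.card = 2) → (∀ a ∈ X, ∀ b ∈ X, a ≠ b → Disjoint a b) →
      (∀ a ∈ X, ∀ b ∈ Y, (b ∩ a).Nonempty) → 3 ≤ X.card → Y = ∅ := by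
    intro X Y hX hY hdX hc h3
    by_contra hne
    obtain ⟨f, hf⟩ := Finset.nonempty_iff_ne_empty.mpr hne
    obtain ⟨T, hTsub, hT3⟩ := Finset.exists_subset_card_eq h3
    obtain ⟨e₁, e₂, e₃, n12, n13, n23, rfl⟩ := Finset.card_eq_three.mp hT3
    have m1 : e₁ ∈ X := hTsub (by simp)
    have m2 : e₂ ∈ X := hTsub (by simp)
    have m3 : e₃ ∈ X := hTsub (by simp)
    exact no_triple (hY f hf) (hdX _ m1 _ m2 n12) (hdX _ m1 _ m3 n13)
      (hdX _ m2 _ m3 n23) (hc _ m1 _ hf) (hc _ m2 _ hf) (hc _ m3 _ hf)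
  by_cases hA3 : 3 ≤ A.card
  · have hBe : B = ∅ := key A B hA hB hdA hcross hA3
    have := matching_le_three A hA hdA
    simp only [hBe, Finset.card_empty]
    omega
  · by_cases hB3 : 3 ≤ B.card
    · have hAe : A = ∅ := key B A hB hA hdB
        (fun a ha b hb => by
          have := hcross b hb a ha
          rwa [Finset.inter_comm] at this) hB3
      have := matching_le_three B hB hdB
      simp only [hAe, Finset.card_empty]
      omega
    · omega

lemma indep_bound (u : Finset (Finset (Fin 6)))
    (hcard : ∀ s ∈ u, s.card = 2 ∨ s.card = 4)
    (hind : ∀ s ∈ u, ∀ t ∈ u, s ≠ t → (symmDiff s t).card ≠ 2) : u.card ≤ 4 := by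
  classical
  set A := u.filter (fun s => s.card = 2) with hAdef
  set u4 := u.filter (fun s => ¬ s.card = 2) with hu4def
  set B := u4.image (fun s => sᶜ) with hBdef
  have hcompl_inj : ∀ s ∈ u4, ∀ t ∈ u4, sᶜ = tᶜ → s = t := by
    intro s _ t _ h
    simpa using congrArg compl h
  have hBcard : B.card = u4.card := Finset.card_image_iff.mpr hcompl_inj
  have hsplit : A.card + u4.card = u.card :=
    Finset.card_filter_add_card_filter_not _
  have hu4card : ∀ s ∈ u4, s.card = 4 := by
    intro s hs
    rw [hu4def, Finset.mem_filter] at hs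
    rcases hcard s hs.1 with h | h
    · exact absurd h hs.2
    · exact h
  have hA2 : ∀ a ∈ A, a.card = 2 := fun a ha => (Finset.mem_filter.mp ha).2
  have hdA : ∀ a ∈ A, ∀ b ∈ A, a ≠ b → Disjoint a b := by
    intro a ha b hb hne
    have ha' := Finset.mem_filter.mp ha
    have hb' := Finset.mem_filter.mp hb
    have h1 := card_sd a b
    have h2 := hind a ha'.1 b hb'.1 hne
    have h3 := sd_ne_zero hne
    rw [Finset.disjoint_iff_inter_eq_empty, ← Finset.card_eq_zero]
    omega
  have hB2 : ∀ b ∈ B, b.card = 2 := by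
    intro b hb
    obtain ⟨s, hs, rfl⟩ := Finset.mem_image.mp hb
    rw [Finset.card_compl, hu4card s hs]
    rfl
  have hdB : ∀ a ∈ B, ∀ b ∈ B, a ≠ b → Disjoint a b := by
    intro a ha b hb hne
    obtain ⟨s, hs, rfl⟩ := Finset.mem_image.mp ha
    obtain ⟨t, ht, rfl⟩ := Finset.mem_image.mp hb
    have hst : s ≠ t := fun h => hne (by rw [h])
    have hs' := (Finset.mem_filter.mp hs).1
    have ht' := (Finset.mem_filter.mp ht).1
    have h1 := card_sd s t
    have h2 := hind s hs' t ht' hst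
    have h3 := sd_ne_zero hst
    have h4 := Finset.card_union_add_card_inter s t
    have h5 : (s ∪ t).card ≤ 6 := by simpa using Finset.card_le_univ (s ∪ t)
    have h6 : sᶜ ∩ tᶜ = (s ∪ t)ᶜ := by rw [Finset.compl_union]
    have h7 : (s ∪ t)ᶜ.card = 6 - (s ∪ t).card := by
      rw [Finset.card_compl]; rfl
    have hcs := hu4card s hs
    have hct := hu4card t ht
    rw [Finset.disjoint_iff_inter_eq_empty, ← Finset.card_eq_zero, h6]
    omega
  have hcross : ∀ a ∈ A, ∀ b ∈ B, (b ∩ a).Nonempty := by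
    intro a ha b hb
    obtain ⟨t, ht, rfl⟩ := Finset.mem_image.mp hb
    have ha' := Finset.mem_filter.mp ha
    have ht' := (Finset.mem_filter.mp ht).1
    have hat : a ≠ t := by
      intro h
      have := hu4card t ht
      rw [← h, ha'.2] at this
      omega
    have h1 := card_sd a t
    have h2 := hind a ha'.1 t ht' hat
    have h3 := hu4card t ht
    have h4 : (a ∩ t).card + (a \ t).card = a.card := by
      rw [Finset.card_inter_add_card_sdiff]
    have h5 : (a \ t).card ≠ 0 := by omega
    obtain ⟨x, hx⟩ := Finset.card_ne_zero.mp h5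
    rw [Finset.mem_sdiff] at hx
    exact ⟨x, Finset.mem_inter.mpr ⟨Finset.mem_compl.mpr hx.2, hx.1⟩⟩
  have := cross_bound A B hA2 hB2 hdA hdB hcross
  omega

/-- The graph on `V₂ ∪ V₃` (vectors with exactly two, resp. four, coordinates
equal to `2` and the rest `0`), adjacency being squared distance `8`, has
chromatic number `8`. -/
theorem chromaticNumber_H_eq_eight :
    (distSqGraph (twosAndZeros 2 ∪ twosAndZeros 4) 8).chromaticNumber = 8 := by
  classical
  set P := twosAndZeros 2 ∪ twosAndZeros 4 with hP
  set G := distSqGraph P 8 with hG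
  -- upper bound: explicit coloring
  have hcol : G.Colorable 8 := by
    refine ⟨SimpleGraph.Coloring.mk (fun v => col (supp v.1)) ?_⟩
    rintro v w hadj
    obtain ⟨s, hs, hvs⟩ := mem_union_iff.mp v.2
    obtain ⟨t, ht, hwt⟩ := mem_union_iff.mp w.2
    have hv' : v = ⟨ind s, hvs ▸ v.2⟩ := Subtype.ext hvs
    have hw' : w = ⟨ind t, hwt ▸ w.2⟩ := Subtype.ext hwt
    rw [hv', hw'] at hadj
    have h2 := (adj_iff _ _).mp hadj
    have := col_valid s t hs ht h2
    simpa only [hvs, hwt, supp_ind] using this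
  -- lower bound: not 7-colorable
  have h7 : ¬ G.Colorable 7 := by
    rintro ⟨C⟩
    set W : Finset (Finset (Fin 6)) :=
      Finset.univ.filter (fun s => s.card = 2 ∨ s.card = 4) with hW
    have hWcard : W.card = 30 := card_W
    set D : Finset (Fin 6) → Fin 7 := fun s =>
      if h : s.card = 2 ∨ s.card = 4 then C ⟨ind s, ind_mem h⟩ else 0 with hD
    have hfib := Finset.card_eq_sum_card_fiberwise
      (f := D) (s := W) (t := Finset.univ) (fun s _ => Finset.mem_univ _)
    have hbound : ∀ c : Fin 7, (W.filter (fun s => D s = c)).card ≤ 4 := by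
      intro c
      apply indep_bound
      · intro s hs
        exact (Finset.mem_filter.mp (Finset.mem_filter.mp hs).1).2
      · intro s hs t ht hne h2
        have hsc := (Finset.mem_filter.mp (Finset.mem_filter.mp hs).1).2
        have htc := (Finset.mem_filter.mp (Finset.mem_filter.mp ht).1).2
        have hadj : G.Adj ⟨ind s, ind_mem hsc⟩ ⟨ind t, ind_mem htc⟩ :=
          (adj_iff _ _).mpr h2
        have hCne := C.valid hadj
        have hDs := (Finset.mem_filter.mp hs).2
        have hDt := (Finset.mem_filter.mp ht).2
        rw [hD] at hDs hDt
        simp only [dif_pos hsc] at hDs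
        simp only [dif_pos htc] at hDt
        exact hCne (by rw [hDs, hDt])
    have : (30:ℕ) ≤ 28 := by
      calc (30:ℕ) = W.card := hWcard.symm
        _ = ∑ c : Fin 7, (W.filter (fun s => D s = c)).card := hfib
        _ ≤ ∑ _c : Fin 7, 4 := Finset.sum_le_sum (fun c _ => hbound c)
        _ = 28 := by simp
    omega
  -- combine
  have hle : G.chromaticNumber ≤ 8 := by
    have := hcol.chromaticNumber_le
    exact_mod_cast this
  have hge : (8:ℕ∞) ≤ G.chromaticNumber := by
    by_contra hlt
    push_neg at hlt
    have : G.chromaticNumber ≤ 7 := Order.le_of_lt_add_one (by norm_num at hlt ⊢; exact_mod_cast hlt)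
    exact h7 (SimpleGraph.chromaticNumber_le_iff_colorable.mp (by exact_mod_cast this))
  exact le_antisymm hle hge
end

section
/- Let V₂ be the set of vectors in ℝ^6 having exactly two coordinates equal to 2 and the remaining four coordinates equal to 0, and let V₃ be the set of vectors in ℝ^6 having exactly four coordinates equal to 2 and the remaining two coordinates equal to 0. Let H be the simple graph on V₂ ∪ V₃ in which two distinct points are adjacent if and only if their squared Euclidean distance equals 8. Then the independence number of H equals 4: there exists an independent set of H of size 4, and every independent set of H has size at most 4. -/
open scoped symmDiff

noncomputable section

def ofSet (s : Finset (Fin 6)) : Fin 6 → ℝ := fun i => if i ∈ s then 2 else 0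

lemma ofSet_injective : Function.Injective ofSet := by
  intro s t h
  ext i
  have h1 := congrFun h i
  unfold ofSet at h1
  by_cases hs : i ∈ s <;> by_cases ht : i ∈ t <;>
    simp [hs, ht] at h1 ⊢ <;> norm_num at h1

lemma distSq_ofSet (s t : Finset (Fin 6)) :
    ∑ i, (ofSet s i - ofSet t i) ^ 2 = 4 * (s ∆ t).card := by
  have key : ∀ i, (ofSet s i - ofSet t i) ^ 2 = if i ∈ s ∆ t then (4:ℝ) else 0 := by
    intro i
    unfold ofSet
    by_cases hs : i ∈ s <;> by_cases ht : i ∈ t <;>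
      simp [hs, ht, Finset.mem_symmDiff] <;> norm_num
  simp_rw [key]
  rw [Finset.sum_ite_mem, Finset.univ_inter, Finset.sum_const]
  simp [mul_comm]

lemma card_symmDiff_aux (s t : Finset (Fin 6)) :
    (s ∆ t).card + 2 * (s ∩ t).card = s.card + t.card := by
  have d : Disjoint (s \ t) (t \ s) := disjoint_sdiff_sdiff
  have h1 : (s ∆ t).card = (s \ t).card + (t \ s).card := by
    rw [symmDiff_def, Finset.sup_eq_union, Finset.card_union_of_disjoint d]
  have h2 := Finset.card_sdiff_add_card_inter s t
  have h3 := Finset.card_sdiff_add_card_inter t s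
  rw [Finset.inter_comm] at h3
  omega

lemma two_bound (A : Finset (Finset (Fin 6))) (h2 : ∀ s ∈ A, s.card = 2)
    (hd : ∀ s ∈ A, ∀ t ∈ A, s ≠ t → Disjoint s t) : A.card ≤ 3 := by
  have h := Finset.card_biUnion (t := id) hd
  have hle : (A.biUnion id).card ≤ 6 := le_trans (Finset.card_le_univ _) (by simp)
  rw [h] at hle
  have hsum : ∑ s ∈ A, (id s).card = A.card * 2 :=
    Finset.sum_const_nat (fun s hs => h2 s hs)
  omega

lemma meet_bound (A : Finset (Finset (Fin 6))) (u : Finset (Fin 6))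
    (hd : ∀ s ∈ A, ∀ t ∈ A, s ≠ t → Disjoint s t)
    (hmeet : ∀ s ∈ A, (s ∩ u).Nonempty) : A.card ≤ u.card := by
  classical
  set f : Finset (Fin 6) → Fin 6 := fun s => if h : (s ∩ u).Nonempty then h.choose else 0 with hf
  have hfmem : ∀ s ∈ A, f s ∈ s ∩ u := by
    intro s hs
    have h := hmeet s hs
    simp only [hf, dif_pos h]
    exact h.choose_spec
  apply Finset.card_le_card_of_injOn f
  · exact fun s hs => (Finset.mem_inter.1 (hfmem s hs)).2
  · intro s hs t ht hft
    by_contra hne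
    have h1 := (Finset.mem_inter.1 (hfmem s hs)).1
    have h2 := (Finset.mem_inter.1 (hfmem t ht)).1
    rw [hft] at h1
    exact Finset.disjoint_left.1 (hd s hs t ht hne) (hft ▸ (Finset.mem_inter.1 (hfmem s hs)).1) h2

lemma core (N : Finset (Finset (Fin 6)))
    (hcard : ∀ s ∈ N, s.card = 2 ∨ s.card = 4)
    (hgood : ∀ s ∈ N, ∀ t ∈ N, s ≠ t → (s ∆ t).card ≠ 2) :
    N.card ≤ 4 := by
  classical
  set A := N.filter (fun s => s.card = 2) with hA
  set B := N.filter (fun s => s.card = 4) with hB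
  have hAmem : ∀ s ∈ A, s ∈ N ∧ s.card = 2 := fun s hs => Finset.mem_filter.1 hs
  have hBmem : ∀ s ∈ B, s ∈ N ∧ s.card = 4 := fun s hs => Finset.mem_filter.1 hs
  -- elements of A are pairwise disjoint
  have hAdisj : ∀ s ∈ A, ∀ t ∈ A, s ≠ t → Disjoint s t := by
    intro s hs t ht hne
    obtain ⟨hsN, hs2⟩ := hAmem s hs
    obtain ⟨htN, ht2⟩ := hAmem t ht
    have hg := hgood s hsN t htN hne
    have hid := card_symmDiff_aux s t
    have hle : (s ∩ t).card ≤ 2 :=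
      le_trans (Finset.card_le_card Finset.inter_subset_left) (le_of_eq hs2)
    have hcases : (s ∩ t).card = 0 ∨ (s ∩ t).card = 2 := by omega
    rcases hcases with h0 | h2'
    · exact Finset.disjoint_iff_inter_eq_empty.2 (Finset.card_eq_zero.1 h0)
    · exfalso; apply hne
      have e1 : s ∩ t = s :=
        Finset.eq_of_subset_of_card_le Finset.inter_subset_left (by omega)
      have e2 : s ∩ t = t :=
        Finset.eq_of_subset_of_card_le Finset.inter_subset_right (by omega)
      rw [← e1, e2]
  -- for distinct elements of B, intersection has card 2
  have hBint : ∀ s ∈ B, ∀ t ∈ B, s ≠ t → (s ∩ t).card = 2 := by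
    intro s hs t ht hne
    obtain ⟨hsN, hs4⟩ := hBmem s hs
    obtain ⟨htN, ht4⟩ := hBmem t ht
    have hg := hgood s hsN t htN hne
    have hid := card_symmDiff_aux s t
    have hu : (s ∪ t).card ≤ 6 := le_trans (Finset.card_le_univ _) (by simp)
    have hiu := Finset.card_inter_add_card_union s t
    have hle : (s ∩ t).card ≤ 4 :=
      le_trans (Finset.card_le_card Finset.inter_subset_left) (le_of_eq hs4)
    have hcases : (s ∩ t).card = 2 ∨ (s ∩ t).card = 4 := by omega
    rcases hcases with h | h
    · exact h
    · exfalso; apply hne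
      have e1 : s ∩ t = s :=
        Finset.eq_of_subset_of_card_le Finset.inter_subset_left (by omega)
      have e2 : s ∩ t = t :=
        Finset.eq_of_subset_of_card_le Finset.inter_subset_right (by omega)
      rw [← e1, e2]
  -- the complements of B
  set Bc := B.image (fun s => sᶜ) with hBc
  have complinj : Function.Injective (fun s : Finset (Fin 6) => sᶜ) :=
    fun s t h => by simpa using congrArg (fun x => xᶜ) h
  have hBcCard : Bc.card = B.card := Finset.card_image_of_injective _ complinj
  have hBc2 : ∀ x ∈ Bc, x.card = 2 := by
    intro x hx
    obtain ⟨s, hs, rfl⟩ := Finset.mem_image.1 hx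
    rw [Finset.card_compl, (hBmem s hs).2]
    simp
  have hBcdisj : ∀ x ∈ Bc, ∀ y ∈ Bc, x ≠ y → Disjoint x y := by
    intro x hx y hy hne
    obtain ⟨s, hs, rfl⟩ := Finset.mem_image.1 hx
    obtain ⟨t, ht, rfl⟩ := Finset.mem_image.1 hy
    have hst : s ≠ t := fun h => hne (by rw [h])
    have h2 := hBint s hs t ht hst
    have hiu := Finset.card_inter_add_card_union s t
    have hucard : (s ∪ t).card = 6 := by
      rw [(hBmem s hs).2, (hBmem t ht).2] at hiu; omega
    have huniv : s ∪ t = Finset.univ :=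
      Finset.eq_of_subset_of_card_le (Finset.subset_univ _) (by simp [hucard])
    rw [Finset.disjoint_iff_inter_eq_empty, ← Finset.compl_union, huniv]
    simp
  have hA3 : A.card ≤ 3 := two_bound A (fun s hs => (hAmem s hs).2) hAdisj
  have hB3 : B.card ≤ 3 := by
    rw [← hBcCard]; exact two_bound Bc hBc2 hBcdisj
  -- cross condition: for s ∈ A, t ∈ B, s \ t is nonempty
  have hcross : ∀ s ∈ A, ∀ t ∈ B, (s \ t).Nonempty := by
    intro s hs t ht
    obtain ⟨hsN, hs2⟩ := hAmem s hs
    obtain ⟨htN, ht4⟩ := hBmem t ht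
    have hne : s ≠ t := fun h => by rw [h, ht4] at hs2; omega
    have hg := hgood s hsN t htN hne
    have hid := card_symmDiff_aux s t
    have hle : (s ∩ t).card ≤ 2 :=
      le_trans (Finset.card_le_card Finset.inter_subset_left) (le_of_eq hs2)
    have hsd := Finset.card_sdiff_add_card_inter s t
    have : 0 < (s \ t).card := by omega
    exact Finset.card_pos.1 this
  have hAB : A.card = 3 → B.card = 0 := by
    intro h3
    rw [Finset.card_eq_zero]
    by_contra hBne
    obtain ⟨t, ht⟩ := Finset.nonempty_iff_ne_empty.2 hBne
    have hmeet : ∀ s ∈ A, (s ∩ tᶜ).Nonempty := by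
      intro s hs
      have := hcross s hs t ht
      rwa [sdiff_eq] at this
    have hb := meet_bound A tᶜ hAdisj hmeet
    rw [Finset.card_compl, (hBmem t ht).2] at hb
    simp at hb
    omega
  have hBA : B.card = 3 → A.card = 0 := by
    intro h3
    rw [Finset.card_eq_zero]
    by_contra hAne
    obtain ⟨s, hs⟩ := Finset.nonempty_iff_ne_empty.2 hAne
    have hmeet : ∀ x ∈ Bc, (x ∩ s).Nonempty := by
      intro x hx
      obtain ⟨t, ht, rfl⟩ := Finset.mem_image.1 hx
      have := hcross s hs t ht
      rw [sdiff_eq, inf_comm] at this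
      exact this
    have hb := meet_bound Bc s hBcdisj hmeet
    rw [hBcCard, h3, (hAmem s hs).2] at hb
    omega
  have hsub : N ⊆ A ∪ B := by
    intro s hs
    rcases hcard s hs with h | h
    · exact Finset.mem_union_left _ (Finset.mem_filter.2 ⟨hs, h⟩)
    · exact Finset.mem_union_right _ (Finset.mem_filter.2 ⟨hs, h⟩)
  have := le_trans (Finset.card_le_card hsub) (Finset.card_union_le A B)
  omega

abbrev Vtx := ↥(twosAndZeros 2 ∪ twosAndZeros 4)

lemma vspec (v : Vtx) : ∃ s : Finset (Fin 6), (s.card = 2 ∨ s.card = 4) ∧ v.1 = ofSet s := by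
  rcases v.2 with ⟨s, hs, hx⟩ | ⟨s, hs, hx⟩
  · exact ⟨s, Or.inl hs, funext hx⟩
  · exact ⟨s, Or.inr hs, funext hx⟩

def Tm (v : Vtx) : Finset (Fin 6) := (vspec v).choose

lemma Tm_card (v : Vtx) : (Tm v).card = 2 ∨ (Tm v).card = 4 := (vspec v).choose_spec.1

lemma Tm_eq (v : Vtx) : v.1 = ofSet (Tm v) := (vspec v).choose_spec.2

lemma adj_iff_s3 (u v : Vtx) :
    (distSqGraph (twosAndZeros 2 ∪ twosAndZeros 4) 8).Adj u v ↔
      Tm u ≠ Tm v ∧ ((Tm u) ∆ (Tm v)).card = 2 := by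
  have hu := Tm_eq u
  have hv := Tm_eq v
  constructor
  · rintro ⟨hne, hsum⟩
    have hTne : Tm u ≠ Tm v := by
      intro h
      exact hne (Subtype.ext (by rw [hu, hv, h]))
    refine ⟨hTne, ?_⟩
    rw [hu, hv, distSq_ofSet] at hsum
    have : (((Tm u) ∆ (Tm v)).card : ℝ) = 2 := by linarith
    exact_mod_cast this
  · rintro ⟨hTne, hc⟩
    refine ⟨fun h => hTne ?_, ?_⟩
    · apply ofSet_injective
      rw [← hu, ← hv, h]
    · show ∑ i, (u.1 i - v.1 i) ^ 2 = 8
      rw [hu, hv, distSq_ofSet, hc]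
      norm_num

/-- Build a vertex from a finset of card 2 or 4. -/
def mkV (s : Finset (Fin 6)) (h : s.card = 2 ∨ s.card = 4) : Vtx :=
  ⟨ofSet s, by
    rcases h with h | h
    · exact Or.inl ⟨s, h, fun i => rfl⟩
    · exact Or.inr ⟨s, h, fun i => rfl⟩⟩

lemma Tm_mkV (s : Finset (Fin 6)) (h : s.card = 2 ∨ s.card = 4) : Tm (mkV s h) = s := by
  apply ofSet_injective
  rw [← Tm_eq]
  rfl

lemma mkV_ne (s t : Finset (Fin 6)) (hs ht) (h : s ≠ t) : mkV s hs ≠ mkV t ht := by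
  intro he
  exact h (ofSet_injective (congrArg Subtype.val he))

/-- The independence number of the graph `H` on `V₂ ∪ V₃` (squared distance `8`)
equals `4`: there is an independent set of size `4` and every independent set
has size at most `4`. -/
theorem indepNum_H_eq_four :
    (∃ M : Set ↥(twosAndZeros 2 ∪ twosAndZeros 4),
      M.Pairwise (fun a b => ¬ (distSqGraph (twosAndZeros 2 ∪ twosAndZeros 4) 8).Adj a b) ∧
      M.ncard = 4) ∧
    ∀ M : Set ↥(twosAndZeros 2 ∪ twosAndZeros 4),
      M.Pairwise (fun a b => ¬ (distSqGraph (twosAndZeros 2 ∪ twosAndZeros 4) 8).Adj a b) →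
      M.ncard ≤ 4 := by
  constructor
  · -- existence of an independent set of size 4
    have h1 : ({0,1} : Finset (Fin 6)).card = 2 ∨ ({0,1} : Finset (Fin 6)).card = 4 := by decide
    have h2 : ({2,3} : Finset (Fin 6)).card = 2 ∨ ({2,3} : Finset (Fin 6)).card = 4 := by decide
    have h3 : ({1,3,4,5} : Finset (Fin 6)).card = 2 ∨ ({1,3,4,5} : Finset (Fin 6)).card = 4 := by decide
    have h4 : ({0,2,4,5} : Finset (Fin 6)).card = 2 ∨ ({0,2,4,5} : Finset (Fin 6)).card = 4 := by decide
    set v1 := mkV {0,1} h1 with hv1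
    set v2 := mkV {2,3} h2 with hv2
    set v3 := mkV {1,3,4,5} h3 with hv3
    set v4 := mkV {0,2,4,5} h4 with hv4
    refine ⟨{v1, v2, v3, v4}, ?_, ?_⟩
    · intro a ha b hb hne
      intro hadj
      obtain ⟨hTne, hc⟩ := (adj_iff_s3 a b).1 hadj
      simp only [Set.mem_insert_iff, Set.mem_singleton_iff] at ha hb
      rcases ha with rfl | rfl | rfl | rfl <;> rcases hb with rfl | rfl | rfl | rfl <;>
        first
          | exact hne rfl
          | (simp only [hv1, hv2, hv3, hv4, Tm_mkV] at hc; revert hc; decide)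
    · have n12 : v1 ≠ v2 := mkV_ne _ _ _ _ (by decide)
      have n13 : v1 ≠ v3 := mkV_ne _ _ _ _ (by decide)
      have n14 : v1 ≠ v4 := mkV_ne _ _ _ _ (by decide)
      have n23 : v2 ≠ v3 := mkV_ne _ _ _ _ (by decide)
      have n24 : v2 ≠ v4 := mkV_ne _ _ _ _ (by decide)
      have n34 : v3 ≠ v4 := mkV_ne _ _ _ _ (by decide)
      rw [Set.ncard_insert_of_notMem (by simp [n12, n13, n14])
            (((Set.finite_singleton v4).insert v3).insert v2),
          Set.ncard_insert_of_notMem (by simp [n23, n24])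
            ((Set.finite_singleton v4).insert v3),
          Set.ncard_insert_of_notMem (by simp [n34]) (Set.finite_singleton v4),
          Set.ncard_singleton]
  · -- upper bound
    intro M hM
    have hinj : Set.InjOn Tm M := by
      intro u _ v _ h
      exact Subtype.ext (by rw [Tm_eq u, Tm_eq v, h])
    have hfin : (Tm '' M).Finite := Set.toFinite _
    set N := hfin.toFinset with hN
    have hNcard : N.card = (Tm '' M).ncard := (Set.ncard_eq_toFinset_card _ hfin).symm
    have himg : (Tm '' M).ncard = M.ncard := Set.ncard_image_of_injOn hinj
    have hle : N.card ≤ 4 := by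
      apply core
      · intro s hs
        rw [hN, Set.Finite.mem_toFinset] at hs
        obtain ⟨v, _, rfl⟩ := hs
        exact Tm_card v
      · intro s hs t ht hne
        rw [hN, Set.Finite.mem_toFinset] at hs ht
        obtain ⟨u, hu, rfl⟩ := hs
        obtain ⟨v, hv, rfl⟩ := ht
        have huv : u ≠ v := fun h => hne (by rw [h])
        have hna := hM hu hv huv
        intro hc
        exact hna ((adj_iff_s3 u v).2 ⟨hne, hc⟩)
    omega
end
end
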